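/- If a, b, c are nonzero rational numbers, not all equal, with (a+b+c)³ = 27abc, then there exists a unique t ∈ ℚ \ {0,1} such that a = c(t-1)³ and b = -ct³. -/

import Mathlib

theorem stmt_3 (a b c : ℚ) (ha : a ≠ 0) (hb : b ≠ 0) (hc : c ≠ 0)
    (heq : (a + b + c) ^ 3 = 27 * (a * b * c)) (hne : ¬(a = b ∧ b = c)) :
    ∃! t : ℚ, t ≠ 0 ∧ t ≠ 1 ∧ a = c * (t - 1) ^ 3 ∧ b = -c * t ^ 3 := by
  have hd : 2 * c - a - b ≠ 0 := by
    intro h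
    apply hne
    have key : 27 * c * (c ^ 2 - a * b) = 0 := by
      linear_combination heq + (9 * c ^ 2 + 3 * c * (a + b + c) + (a + b + c) ^ 2) * h
    have hab : c ^ 2 = a * b := by
      have h27 : (27 : ℚ) * c ≠ 0 := by positivity
      have := mul_eq_zero.mp key
      rcases this with h' | h'
      · exact absurd h' h27
      · linarith
    have h1 : (a - b) ^ 2 = 0 := by
      linear_combination 4 * hab - (a + b + 2 * c) * h
    have h2 : a = b := by
      have := pow_eq_zero_iff (n := 2) (by norm_num) |>.mp h1
      linarith
    exact ⟨h2, by linarith⟩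
  have ha3 : a * (2 * c - a - b) ^ 3 = c * (2 * a - b - c) ^ 3 := by
    linear_combination (c - a) * heq
  have hb3 : b * (2 * c - a - b) ^ 3 = -c * (a - 2 * b + c) ^ 3 := by
    linear_combination (c - b) * heq
  set t : ℚ := (a - 2 * b + c) / (2 * c - a - b) with htdef
  have hbeq : b = -c * t ^ 3 := by
    rw [htdef]
    rw [div_pow, mul_div_assoc', eq_div_iff (pow_ne_zero 3 hd)]
    linear_combination hb3
  have haeq : a = c * (t - 1) ^ 3 := by
    have : t - 1 = (2 * a - b - c) / (2 * c - a - b) := by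
      rw [htdef]; field_simp; ring
    rw [this]
    rw [div_pow, mul_div_assoc', eq_div_iff (pow_ne_zero 3 hd)]
    linear_combination ha3
  have ht0 : t ≠ 0 := by
    intro h
    apply hb
    rw [hbeq, h]; ring
  have ht1 : t ≠ 1 := by
    intro h
    apply ha
    rw [haeq, h]; ring
  refine ⟨t, ⟨ht0, ht1, haeq, hbeq⟩, ?_⟩
  rintro s ⟨hs0, hs1, hsa, hsb⟩
  have hcube : s ^ 3 = t ^ 3 := by
    have : -c * s ^ 3 = -c * t ^ 3 := by rw [← hsb, ← hbeq]
    exact mul_left_cancel₀ (neg_ne_zero.mpr hc) this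
  exact (Odd.strictMono_pow (by decide : Odd 3)).injective hcube
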